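/- Let (F,W) be a mixed Hodge structure on V and set I^{p,q} = F^p ∩ σ(F^q) ∩ W_{p+q} for p,q ∈ ℤ. Then the following are equivalent: (i) there exists a grading Y of W with σYσ = Y and Y(F^p) ⊆ F^p for all p; (ii) V = ⊕_{p,q} I^{p,q}, F^p = ⊕_{r≥p, s} I^{r,s} for all p, and W_k = ⊕_{r+s≤k} I^{r,s} for all k. Moreover, when these conditions hold, the grading Y in (i) is unique and acts as multiplication by p+q on I^{p,q}. -/

import Mathlib

/-- A finite increasing filtration of `V` indexed by `ℤ`. -/
def FinIncrFil {V : Type*} [AddCommGroup V] [Module ℂ V] (W : ℤ → Submodule ℂ V) : Prop :=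
  Monotone W ∧ (∃ a : ℤ, W a = ⊥) ∧ (∃ b : ℤ, W b = ⊤)

/-- A finite decreasing filtration of `V` indexed by `ℤ`. -/
def FinDecrFil {V : Type*} [AddCommGroup V] [Module ℂ V] (F : ℤ → Submodule ℂ V) : Prop :=
  Antitone F ∧ (∃ a : ℤ, F a = ⊤) ∧ (∃ b : ℤ, F b = ⊥)

/-- `σ` is a conjugation: a conjugate-linear involution of the complex vector space `V`
(realizing `V` as the complexification of its fixed set `V_ℝ`). -/
def IsConjugation {V : Type*} [AddCommGroup V] [Module ℂ V] (σ : V →ₗ[ℝ] V) : Prop :=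
  (∀ v, σ (σ v) = v) ∧ ∀ (c : ℂ) (v : V), σ (c • v) = (starRingEnd ℂ) c • σ v

/-- `(F, W)` is a mixed Hodge structure on `V` with respect to the conjugation `σ`:
`W` is a finite increasing σ-stable filtration, `F` a finite decreasing filtration,
and for every `k`, `Gr^W_k = F^p Gr^W_k ⊕ σ(F^{k-p+1} Gr^W_k)` for all `p`
(expressed elementwise on representatives). -/
def IsMHS {V : Type*} [AddCommGroup V] [Module ℂ V] (σ : V →ₗ[ℝ] V)
    (F W : ℤ → Submodule ℂ V) : Prop :=
  FinIncrFil W ∧ (∀ k : ℤ, ∀ v ∈ W k, σ v ∈ W k) ∧ FinDecrFil F ∧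
    ∀ k p : ℤ,
      (∀ v ∈ W k, ∃ a ∈ F p ⊓ W k, ∃ b ∈ F (k - p + 1) ⊓ W k, v - a - σ b ∈ W (k - 1)) ∧
      (∀ a ∈ F p ⊓ W k, ∀ b ∈ F (k - p + 1) ⊓ W k, a - σ b ∈ W (k - 1) → a ∈ W (k - 1))

/-- A grading of an increasing filtration `W` of a complex vector space: a semisimple
endomorphism with integer eigenvalues with `W i = E_i(Y) ⊕ W (i-1)` for all `i`. -/
def IsGrading {V : Type*} [AddCommGroup V] [Module ℂ V] (W : ℤ → Submodule ℂ V)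
    (Y : Module.End ℂ V) : Prop :=
  (⨆ i : ℤ, Y.eigenspace (i : ℂ)) = ⊤ ∧
    ∀ i : ℤ, W i = Y.eigenspace (i : ℂ) ⊔ W (i - 1) ∧
      Disjoint (Y.eigenspace (i : ℂ)) (W (i - 1))

/-- An endomorphism `X` of `V` is real: `σ X σ = X`. -/
def IsRealEnd {V : Type*} [AddCommGroup V] [Module ℂ V] (σ : V →ₗ[ℝ] V)
    (X : Module.End ℂ V) : Prop :=
  ∀ v, σ (X (σ v)) = X v

set_option linter.unusedSectionVars false
set_option linter.unusedVariables false
set_option maxHeartbeats 1000000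
namespace ZL6

variable {V : Type*} [AddCommGroup V] [Module ℂ V]
variable {ι : Type*} [DecidableEq ι] {f : ι → Submodule ℂ V}

/-- Projection onto the `i`-th component of an internal direct sum. -/
noncomputable def projOf (hf : DirectSum.IsInternal f) (i : ι) : V →ₗ[ℂ] V :=
  letI := hf.chooseDecomposition
  (f i).subtype ∘ₗ (DFinsupp.lapply i) ∘ₗ (DirectSum.decomposeLinearEquiv f).toLinearMap

lemma projOf_mem (hf : DirectSum.IsInternal f) (i : ι) (v : V) : projOf hf i v ∈ f i := by
  letI := hf.chooseDecomposition
  exact (DirectSum.decompose f v i).2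

lemma projOf_of_mem_same (hf : DirectSum.IsInternal f) {i : ι} {v : V} (hv : v ∈ f i) :
    projOf hf i v = v := by
  letI := hf.chooseDecomposition
  exact DirectSum.decompose_of_mem_same f hv

lemma projOf_of_mem_ne (hf : DirectSum.IsInternal f) {i j : ι} {v : V} (hv : v ∈ f j)
    (hij : j ≠ i) : projOf hf i v = 0 := by
  letI := hf.chooseDecomposition
  exact DirectSum.decompose_of_mem_ne f hv hij

lemma exists_sum_projOf (hf : DirectSum.IsInternal f) (v : V) :
    ∃ s : Finset ι, (∑ i ∈ s, projOf hf i v = v) ∧ ∀ j ∉ s, projOf hf j v = 0 := by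
  letI := hf.chooseDecomposition
  classical
  refine ⟨(DirectSum.decompose f v).support, ?_, fun j hj => ?_⟩
  · exact DirectSum.sum_support_decompose f v
  · have : DirectSum.decompose f v j = 0 := DFinsupp.notMem_support_iff.1 hj
    exact congrArg Subtype.val this

/-- If all components outside `s` vanish, `v` is the sum of its components over `s`. -/
lemma sum_projOf (hf : DirectSum.IsInternal f) {v : V} {s : Finset ι}
    (hz : ∀ j ∉ s, projOf hf j v = 0) : ∑ i ∈ s, projOf hf i v = v := by
  classical
  obtain ⟨t, ht, htz⟩ := exists_sum_projOf hf v
  have h1 : ∑ i ∈ s, projOf hf i v = ∑ i ∈ s ∪ t, projOf hf i v :=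
    Finset.sum_subset Finset.subset_union_left (fun j _ hj => hz j hj)
  have h2 : ∑ i ∈ t, projOf hf i v = ∑ i ∈ s ∪ t, projOf hf i v :=
    Finset.sum_subset Finset.subset_union_right (fun j _ hj => htz j hj)
  rw [h1, ← h2, ht]

/-- `projOf` kills a supremum over an index set not containing `i`. -/
lemma projOf_eq_zero_of_mem_iSup (hf : DirectSum.IsInternal f) {i : ι} {T : Set ι}
    (hiT : i ∉ T) {v : V} (hv : v ∈ ⨆ j ∈ T, f j) : projOf hf i v = 0 := by
  rw [iSup_subtype'] at hv
  induction hv using Submodule.iSup_induction' with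
  | mem j x hx =>
    obtain ⟨j, hj⟩ := j
    exact projOf_of_mem_ne hf hx (fun h => hiT (h ▸ hj))
  | zero => simp
  | add x y hx hy ihx ihy => rw [map_add, ihx, ihy, add_zero]

/-- A projection commutes with any additive map preserving each summand. -/
lemma projOf_comm (hf : DirectSum.IsInternal f) (g : V →+ V)
    (hg : ∀ j, ∀ x ∈ f j, g x ∈ f j) (i : ι) (v : V) :
    projOf hf i (g v) = g (projOf hf i v) := by
  classical
  obtain ⟨s, hs, hz⟩ := exists_sum_projOf hf v
  conv_lhs => rw [← hs]
  rw [map_sum, map_sum]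
  rw [Finset.sum_congr rfl (fun j hj => ?_)]
  · -- goal after congr: ∑ j ∈ s, (if j = i then g (projOf hf i v) else 0) = g (projOf hf i v)
    rw [Finset.sum_ite_eq s i (fun _ => g (projOf hf i v))]
    by_cases hi : i ∈ s
    · simp [hi]
    · simp [hi, hz i hi]
  · -- per-term
    by_cases hij : i = j
    · subst hij; simp [projOf_of_mem_same hf (hg i _ (projOf_mem hf i v))]
    · simp [hij, projOf_of_mem_ne hf (hg j _ (projOf_mem hf j v)) (fun h => hij h.symm)]

end ZL6

namespace ZL6
variable {V : Type*} [AddCommGroup V] [Module ℂ V] [FiniteDimensional ℂ V]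

/-- The conjugation as a semilinear map. -/
def conj' {σ : V →ₗ[ℝ] V} (hσ : IsConjugation σ) : V →ₛₗ[starRingEnd ℂ] V where
  toFun := σ
  map_add' := σ.map_add
  map_smul' := hσ.2

@[simp] lemma conj'_apply {σ : V →ₗ[ℝ] V} (hσ : IsConjugation σ) (v : V) :
    conj' hσ v = σ v := rfl

section Graded

variable {σ : V →ₗ[ℝ] V} {F W : ℤ → Submodule ℂ V} {Y : Module.End ℂ V}

/-- The integer eigenspaces of `Y`. -/
noncomputable abbrev E (Y : Module.End ℂ V) (i : ℤ) : Submodule ℂ V :=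
  Y.eigenspace (i : ℂ)

lemma isInternal_E (hY : IsGrading W Y) : DirectSum.IsInternal (E Y) := by
  refine DirectSum.isInternal_submodule_of_iSupIndep_of_iSup_eq_top ?_ hY.1
  exact (Module.End.eigenspaces_iSupIndep Y).comp (fun a b h => by exact_mod_cast h)

lemma E_le_W (hY : IsGrading W Y) (i : ℤ) : E Y i ≤ W i :=
  (hY.2 i).1 ▸ le_sup_left

lemma sigma_E (hσ : IsConjugation σ) (hre : IsRealEnd σ Y) {i : ℤ} {v : V}
    (hv : v ∈ E Y i) : σ v ∈ E Y i := by
  rw [Module.End.mem_eigenspace_iff] at hv ⊢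
  have h1 : Y (σ v) = σ (Y v) := by
    have := hre (σ v); rw [hσ.1 v] at this; exact this.symm
  rw [h1, hv, hσ.2]
  norm_num

lemma Y_sigma (hσ : IsConjugation σ) (hre : IsRealEnd σ Y) (v : V) :
    Y (σ v) = σ (Y v) := by
  have := hre (σ v); rw [hσ.1 v] at this; exact this.symm


lemma projOf_E_Y (hY : IsGrading W Y) (i : ℤ) (v : V) :
    projOf (isInternal_E hY) i (Y v) = ((i : ℤ) : ℂ) • projOf (isInternal_E hY) i v := by
  have h := projOf_comm (isInternal_E hY) Y.toAddMonoidHom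
    (fun j x hx => by
      have hx' := Module.End.mem_eigenspace_iff.1 hx
      show Y x ∈ E Y j
      rw [hx']; exact (E Y j).smul_mem _ hx) i v
  rw [show (Y.toAddMonoidHom : V → V) = Y from rfl] at h
  rw [h]
  exact Module.End.mem_eigenspace_iff.1 (projOf_mem (isInternal_E hY) i v)

lemma projOf_E_sigma (hσ : IsConjugation σ) (hre : IsRealEnd σ Y) (hY : IsGrading W Y)
    (i : ℤ) (v : V) :
    projOf (isInternal_E hY) i (σ v) = σ (projOf (isInternal_E hY) i v) :=
  projOf_comm (isInternal_E hY) σ.toAddMonoidHom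
    (fun _ x hx => sigma_E hσ hre hx) i v

lemma projOf_E_invariant_aux (hY : IsGrading W Y) {U : Submodule ℂ V}
    (hU : ∀ v ∈ U, Y v ∈ U) (s : Finset ℤ) :
    ∀ v ∈ U, (∀ j ∉ s, projOf (isInternal_E hY) j v = 0) →
      ∀ i, projOf (isInternal_E hY) i v ∈ U := by
  classical
  induction s using Finset.induction with
  | empty =>
    intro v _ h0 i
    rw [h0 i (Finset.notMem_empty i)]; exact U.zero_mem
  | @insert a t ha ih =>
    intro v hv h0 i
    set π := projOf (isInternal_E hY) with hπ
    have hw : Y v - ((a : ℤ) : ℂ) • v ∈ U := sub_mem (hU v hv) (U.smul_mem _ hv)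
    have hwj : ∀ j : ℤ, π j (Y v - ((a : ℤ) : ℂ) • v)
        = (((j : ℤ) : ℂ) - ((a : ℤ) : ℂ)) • π j v := by
      intro j
      rw [map_sub, map_smul, hπ, projOf_E_Y hY, sub_smul]
    have hwsupp : ∀ j ∉ t, π j (Y v - ((a : ℤ) : ℂ) • v) = 0 := by
      intro j hj
      rw [hwj]
      by_cases hja : j = a
      · subst hja; simp
      · rw [h0 j (by simp [hja, hj]), smul_zero]
    have hcomp : ∀ j : ℤ, j ≠ a → π j v ∈ U := by
      intro j hja
      have hmem := ih _ hw hwsupp j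
      rw [hwj] at hmem
      have hne : (((j : ℤ) : ℂ) - ((a : ℤ) : ℂ)) ≠ 0 :=
        sub_ne_zero.2 (fun h => hja (by exact_mod_cast h))
      have := U.smul_mem (((j : ℤ) : ℂ) - ((a : ℤ) : ℂ))⁻¹ hmem
      rwa [smul_smul, inv_mul_cancel₀ hne, one_smul] at this
    by_cases hia : i = a
    · subst hia
      have hsum : ∑ j ∈ insert i t, π j v = v := sum_projOf _ h0
      rw [Finset.sum_insert ha] at hsum
      have hrw : π i v = v - ∑ j ∈ t, π j v := eq_sub_of_add_eq hsum
      rw [hrw]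
      exact sub_mem hv (Submodule.sum_mem _ fun j hj => hcomp j (fun h => ha (h ▸ hj)))
    · exact hcomp i hia

lemma projOf_E_invariant (hY : IsGrading W Y) {U : Submodule ℂ V}
    (hU : ∀ v ∈ U, Y v ∈ U) {v : V} (hv : v ∈ U) (i : ℤ) :
    projOf (isInternal_E hY) i v ∈ U := by
  obtain ⟨s, _, hz⟩ := exists_sum_projOf (isInternal_E hY) v
  exact projOf_E_invariant_aux hY hU s v hv hz i


lemma W_eq_biSup_E (hFW : IsMHS σ F W) (hY : IsGrading W Y) (k : ℤ) :
    W k = ⨆ i ∈ {j : ℤ | j ≤ k}, E Y i := by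
  obtain ⟨hmono, ⟨a, ha⟩, -⟩ := hFW.1
  have hle : ∀ k : ℤ, ⨆ i ∈ {j : ℤ | j ≤ k}, E Y i ≤ W k := fun k =>
    iSup₂_le fun i hi => (E_le_W hY i).trans (hmono hi)
  have haux : ∀ n : ℕ, ∀ k : ℤ, k ≤ a + n → W k ≤ ⨆ i ∈ {j : ℤ | j ≤ k}, E Y i := by
    intro n
    induction n with
    | zero =>
      intro k hk
      have : W k ≤ W a := hmono (by omega)
      rw [ha] at this
      exact this.trans bot_le
    | succ n ih =>
      intro k hk
      by_cases h : k ≤ a + n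
      · exact ih k h
      · rw [(hY.2 k).1]
        refine sup_le ?_ ?_
        · exact le_iSup₂ (f := fun i _ => E Y i) k (show k ∈ {j : ℤ | j ≤ k} by simp)
        · refine (ih (k - 1) (by omega)).trans ?_
          exact iSup₂_mono' fun i hi => ⟨i, show i ∈ {j : ℤ | j ≤ k} by
            simp only [Set.mem_setOf_eq] at hi ⊢; omega, le_rfl⟩
  exact le_antisymm (haux (k - a).toNat k (by omega)) (hle k)

variable (hσ : IsConjugation σ) (hFW : IsMHS σ F W) (hY : IsGrading W Y)
  (hre : IsRealEnd σ Y) (hpr : ∀ p : ℤ, ∀ v ∈ F p, Y v ∈ F p)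

include hσ hFW hY hre hpr

lemma hodge_surj (k p : ℤ) {v : V} (hv : v ∈ E Y k) :
    ∃ a ∈ F p ⊓ E Y k, ∃ b ∈ F (k - p + 1) ⊓ E Y k, v = a + σ b := by
  obtain ⟨a, ⟨haF, haW⟩, b, ⟨hbF, hbW⟩, hmod⟩ :=
    (hFW.2.2.2 k p).1 v (E_le_W hY k hv)
  set π := projOf (isInternal_E hY) k with hπdef
  have hπv : π v = v := projOf_of_mem_same _ hv
  have hπa : π a ∈ F p := projOf_E_invariant hY (hpr p) haF k
  have hπb : π b ∈ F (k - p + 1) := projOf_E_invariant hY (hpr _) hbF k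
  have hπσb : π (σ b) = σ (π b) := projOf_E_sigma hσ hre hY k b
  have hzero : π (v - a - σ b) = 0 := by
    refine projOf_eq_zero_of_mem_iSup _ (T := {j : ℤ | j ≤ k - 1}) (by simp) ?_
    rw [← W_eq_biSup_E hFW hY]; exact hmod
  rw [map_sub, map_sub, hπv, hπσb, sub_sub] at hzero
  exact ⟨π a, ⟨hπa, projOf_mem _ _ _⟩, π b, ⟨hπb, projOf_mem _ _ _⟩, sub_eq_zero.1 hzero⟩

lemma hodge_disj (k p : ℤ) {a b : V} (haF : a ∈ F p) (haE : a ∈ E Y k)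
    (hb : b ∈ F (k - p + 1)) (hab : a = σ b) : a = 0 := by
  have hbeq : b = σ a := by rw [hab, hσ.1]
  have hbE : b ∈ E Y k := hbeq ▸ sigma_E hσ hre haE
  have h1 : a ∈ W (k - 1) :=
    (hFW.2.2.2 k p).2 a ⟨haF, E_le_W hY k haE⟩ b ⟨hb, E_le_W hY k hbE⟩
      (by rw [← hab, sub_self]; exact (W (k-1)).zero_mem)
  exact Submodule.disjoint_def.1 (hY.2 k).2 a haE h1


end Graded

section Main
variable {σ : V →ₗ[ℝ] V} {F W : ℤ → Submodule ℂ V} {Y : Module.End ℂ V}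

/-- The conjugate of the filtration `F`. -/
noncomputable def Fbar (hσ : IsConjugation σ) (F : ℤ → Submodule ℂ V) (q : ℤ) :
    Submodule ℂ V :=
  Submodule.map (conj' hσ) (F q)

lemma mem_Fbar_iff (hσ : IsConjugation σ) {q : ℤ} {x : V} :
    x ∈ Fbar hσ F q ↔ ∃ y ∈ F q, σ y = x := Submodule.mem_map

lemma sigma_mem_Fbar (hσ : IsConjugation σ) {q : ℤ} {y : V} (hy : y ∈ F q) :
    σ y ∈ Fbar hσ F q := ⟨y, hy, rfl⟩

lemma Fbar_anti (hσ : IsConjugation σ) (hFanti : Antitone F) : Antitone (Fbar hσ F) :=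
  fun _ _ h => Submodule.map_mono (hFanti h)

/-- `H^{r,s} = F^r ∩ σ(F^s) ∩ E_{r+s}(Y)`. -/
noncomputable def Hpq (hσ : IsConjugation σ) (F : ℤ → Submodule ℂ V) (Y : Module.End ℂ V)
    (r s : ℤ) : Submodule ℂ V :=
  F r ⊓ Fbar hσ F s ⊓ E Y (r + s)

variable (hσ : IsConjugation σ) (hFW : IsMHS σ F W) (hY : IsGrading W Y)
  (hre : IsRealEnd σ Y) (hpr : ∀ p : ℤ, ∀ v ∈ F p, Y v ∈ F p)

include hσ hFW hY hre hpr

/-- Lemma A: `I^{p,q} ⊆ E_{p+q}(Y)`. -/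
lemma lemA (p q : ℤ) {v : V} (hv1 : v ∈ F p) (hv2 : v ∈ Fbar hσ F q)
    (hv3 : v ∈ W (p + q)) : v ∈ E Y (p + q) := by
  classical
  set k := p + q with hk
  obtain ⟨u, huF, huσ⟩ := (mem_Fbar_iff hσ).1 hv2
  have hπσ : ∀ j : ℤ, projOf (isInternal_E hY) j v = σ (projOf (isInternal_E hY) j u) := by
    intro j
    rw [← huσ, projOf_E_sigma hσ hre hY]
  have hz : ∀ j ∉ ({k} : Finset ℤ), projOf (isInternal_E hY) j v = 0 := by
    intro j hj
    have hjk : j ≠ k := by simpa using hj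
    rcases lt_or_gt_of_ne hjk with hlt | hgt
    · refine hodge_disj hσ hFW hY hre hpr j p
        (projOf_E_invariant hY (hpr p) hv1 j) (projOf_mem _ _ _) ?_ (hπσ j)
      exact hFW.2.2.1.1 (by omega) (projOf_E_invariant hY (hpr q) huF j)
    · refine projOf_eq_zero_of_mem_iSup _ (T := {i : ℤ | i ≤ k}) (by simpa using hgt) ?_
      rw [← W_eq_biSup_E hFW hY]; exact hv3
  have hsum := sum_projOf (isInternal_E hY) (s := ({k} : Finset ℤ)) hz
  rw [Finset.sum_singleton] at hsum
  rw [← hsum]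
  exact projOf_mem _ _ _

lemma FE_eq (k : ℤ) : ∀ p : ℤ, F p ⊓ E Y k = ⨆ r ∈ {r : ℤ | p ≤ r}, Hpq hσ F Y r (k - r) := by
  obtain ⟨hFanti, ⟨a0, ha0⟩, ⟨b0, hb0⟩⟩ := hFW.2.2.1
  have hHle : ∀ r : ℤ, Hpq hσ F Y r (k - r) ≤ F r ⊓ E Y k := by
    intro r
    have : r + (k - r) = k := by ring
    rw [Hpq, this]
    exact inf_le_inf_right _ inf_le_left
  have step : ∀ p : ℤ, F p ⊓ E Y k = Hpq hσ F Y p (k - p) ⊔ (F (p + 1) ⊓ E Y k) := by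
    intro p
    refine le_antisymm ?_ (sup_le (hHle p) (inf_le_inf_right _ ?_))
    · rintro v ⟨hvF, hvE⟩
      obtain ⟨a, ⟨haF, haE⟩, b, ⟨hbF, hbE⟩, heq⟩ :=
        hodge_surj hσ hFW hY hre hpr k (p + 1) hvE
      rw [show k - (p + 1) + 1 = k - p by ring] at hbF
      have hσb : σ b = v - a := by rw [heq]; abel
      have h1 : σ b ∈ Hpq hσ F Y p (k - p) := by
        refine ⟨⟨?_, sigma_mem_Fbar hσ hbF⟩, ?_⟩
        · rw [hσb]; exact sub_mem hvF (hFanti (by omega) haF)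
        · rw [show p + (k - p) = k by ring]; exact sigma_E hσ hre hbE
      refine Submodule.mem_sup.2 ⟨σ b, h1, a, ⟨haF, haE⟩, by rw [heq]; abel⟩
    · exact hFanti (by omega)
  have haux : ∀ n : ℕ, ∀ p : ℤ, b0 - n ≤ p →
      F p ⊓ E Y k = ⨆ r ∈ {r : ℤ | p ≤ r}, Hpq hσ F Y r (k - r) := by
    intro n
    induction n with
    | zero =>
      intro p hp
      refine le_antisymm ?_ (iSup₂_le fun r hr => ?_)
      · refine inf_le_left.trans ?_
        have : F p ≤ F b0 := hFanti (by omega)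
        rw [hb0] at this
        exact this.trans bot_le
      · refine (hHle r).trans (inf_le_left.trans ?_)
        have : F r ≤ F b0 := hFanti (by simp only [Set.mem_setOf_eq] at hr; omega)
        rw [hb0] at this
        exact this.trans bot_le
    | succ n ih =>
      intro p hp
      by_cases h : b0 - n ≤ p
      · exact ih p h
      · rw [step p, ih (p + 1) (by omega)]
        refine le_antisymm (sup_le (le_iSup₂ (f := fun r _ => Hpq hσ F Y r (k - r)) p
          (by simp)) (iSup₂_mono' fun r hr => ⟨r, by
            simp only [Set.mem_setOf_eq] at hr ⊢; omega, le_rfl⟩)) (iSup₂_le fun r hr => ?_)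
        simp only [Set.mem_setOf_eq] at hr
        rcases eq_or_lt_of_le hr with h' | h'
        · exact h' ▸ le_sup_left
        · exact le_sup_of_le_right (le_iSup₂ (f := fun r _ => Hpq hσ F Y r (k - r)) r
            (by simp only [Set.mem_setOf_eq]; omega))
  intro p
  exact haux (b0 - p).toNat p (by omega)

lemma E_eq (k : ℤ) : E Y k = ⨆ r : ℤ, Hpq hσ F Y r (k - r) := by
  obtain ⟨hFanti, ⟨a0, ha0⟩, ⟨b0, hb0⟩⟩ := hFW.2.2.1
  have h1 : F a0 ⊓ E Y k = E Y k := by rw [ha0, top_inf_eq]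
  refine le_antisymm ?_ (iSup_le fun r => ?_)
  · rw [← h1, FE_eq hσ hFW hY hre hpr k a0]
    exact iSup₂_le fun r _ => le_iSup (fun r : ℤ => Hpq hσ F Y r (k - r)) r
  · have hr : r + (k - r) = k := by ring
    calc Hpq hσ F Y r (k - r) ≤ E Y (r + (k - r)) := inf_le_right
      _ = E Y k := by rw [hr]


lemma F_decomp (p : ℤ) : F p = ⨆ k : ℤ, (F p ⊓ E Y k) := by
  refine le_antisymm ?_ (iSup_le fun k => inf_le_left)
  intro v hv
  obtain ⟨s, hs, hz⟩ := exists_sum_projOf (isInternal_E hY) v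
  rw [← hs]
  refine Submodule.sum_mem _ fun j _ => Submodule.mem_iSup_of_mem j ?_
  exact ⟨projOf_E_invariant hY (hpr p) hv j, projOf_mem _ _ _⟩

lemma F_formula (p : ℤ) :
    F p = ⨆ r : ℤ, ⨆ (_ : p ≤ r), ⨆ s : ℤ, Hpq hσ F Y r s := by
  rw [F_decomp hσ hFW hY hre hpr p]
  refine le_antisymm (iSup_le fun k => ?_) ?_
  · rw [FE_eq hσ hFW hY hre hpr k p]
    refine iSup₂_le fun r hr => ?_
    simp only [Set.mem_setOf_eq] at hr
    exact le_iSup_of_le r (le_iSup_of_le hr (le_iSup_of_le (k - r) le_rfl))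
  · refine iSup_le fun r => iSup_le fun hr => iSup_le fun s => ?_
    refine le_iSup_of_le (r + s) (le_inf (inf_le_left.trans ?_) inf_le_right)
    exact inf_le_left.trans (hFW.2.2.1.1 hr)

lemma W_formula (k : ℤ) :
    W k = ⨆ r : ℤ, ⨆ s : ℤ, ⨆ (_ : r + s ≤ k), Hpq hσ F Y r s := by
  rw [W_eq_biSup_E hFW hY k]
  refine le_antisymm (iSup₂_le fun i hi => ?_) ?_
  · simp only [Set.mem_setOf_eq] at hi
    rw [E_eq hσ hFW hY hre hpr i]
    refine iSup_le fun r => ?_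
    exact le_iSup_of_le r (le_iSup_of_le (i - r) (le_iSup_of_le (by omega) le_rfl))
  · refine iSup_le fun r => iSup_le fun s => iSup_le fun hrs => ?_
    exact le_iSup₂_of_le (r + s) (by simpa using hrs) inf_le_right

lemma iSup_H_top : ⨆ pq : ℤ × ℤ, Hpq hσ F Y pq.1 pq.2 = ⊤ := by
  obtain ⟨-, -, ⟨b, hb⟩⟩ := hFW.1
  refine le_antisymm le_top ?_
  rw [← hb, W_eq_biSup_E hFW hY b]
  refine iSup₂_le fun i _ => ?_
  rw [E_eq hσ hFW hY hre hpr i]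
  exact iSup_le fun r => le_iSup (fun pq : ℤ × ℤ => Hpq hσ F Y pq.1 pq.2) (r, i - r)

lemma indep_H : iSupIndep (fun pq : ℤ × ℤ => Hpq hσ F Y pq.1 pq.2) := by
  have hFanti := hFW.2.2.1.1
  intro pq
  rw [Submodule.disjoint_def]
  intro v hv hv'
  obtain ⟨p, q⟩ := pq
  obtain ⟨⟨hvF, hvFb⟩, hvE⟩ := hv
  set k := p + q with hk
  set π := projOf (isInternal_E hY) k with hπ
  have hπv : π v = v := projOf_of_mem_same _ hvE
  rw [iSup_subtype'] at hv'
  have hvmap : v ∈ ⨆ j : {j : ℤ × ℤ // j ≠ (p, q)},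
      Submodule.map π (Hpq hσ F Y j.1.1 j.1.2) := by
    rw [← Submodule.map_iSup]
    exact ⟨v, hv', hπv⟩
  have hAB : ∀ r s : ℤ, (r, s) ≠ (p, q) →
      Submodule.map π (Hpq hσ F Y r s) ≤
        (F (p + 1) ⊓ E Y k) ⊔ (Fbar hσ F (q + 1) ⊓ E Y k) := by
    intro r s hne
    rw [Submodule.map_le_iff_le_comap]
    rintro x ⟨⟨hxF, hxFb⟩, hxE⟩
    rw [Submodule.mem_comap]
    by_cases hrs : r + s = k
    · have hxEk : x ∈ E Y k := by rw [← hrs]; exact hxE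
      have hπx : π x = x := projOf_of_mem_same _ hxEk
      rw [hπx]
      rcases lt_trichotomy r p with h | h | h
      · refine Submodule.mem_sup_right ⟨Fbar_anti hσ hFanti (by omega) hxFb, hxEk⟩
      · exact absurd (by rw [h, show s = q by omega] : (r, s) = (p, q)) hne
      · exact Submodule.mem_sup_left ⟨hFanti (by omega) hxF, hxEk⟩
    · rw [hπ, projOf_of_mem_ne _ hxE hrs]
      exact Submodule.zero_mem _
  have hABsup : (⨆ j : {j : ℤ × ℤ // j ≠ (p, q)},
      Submodule.map π (Hpq hσ F Y j.1.1 j.1.2)) ≤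
        (F (p + 1) ⊓ E Y k) ⊔ (Fbar hσ F (q + 1) ⊓ E Y k) :=
    iSup_le fun j => hAB j.1.1 j.1.2 (by simpa using j.2)
  obtain ⟨x, hx, y, hy, hxy⟩ := Submodule.mem_sup.1 (hABsup hvmap)
  have hyFb : y ∈ Fbar hσ F q := Fbar_anti hσ hFanti (by omega) hy.1
  have hxv : x = v - y := by rw [← hxy]; abel
  have hxFb : x ∈ Fbar hσ F q := hxv ▸ sub_mem hvFb hyFb
  obtain ⟨u, huF, huσ⟩ := (mem_Fbar_iff hσ).1 hxFb
  have hx0 : x = 0 := hodge_disj hσ hFW hY hre hpr k (p + 1) hx.1 hx.2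
    (show u ∈ F (k - (p + 1) + 1) by rw [show k - (p + 1) + 1 = q by omega]; exact huF)
    huσ.symm
  have hvy : v = y := by rw [← hxy, hx0, zero_add]
  obtain ⟨u', hu'F, hu'σ⟩ := (mem_Fbar_iff hσ).1 (hvy ▸ hy.1)
  exact hodge_disj hσ hFW hY hre hpr k p hvF hvE
    (show u' ∈ F (k - p + 1) by rw [show k - p + 1 = q + 1 by omega]; exact hu'F)
    hu'σ.symm

end Main

section Construct
variable {σ : V →ₗ[ℝ] V} {F W : ℤ → Submodule ℂ V} {I : ℤ → ℤ → Submodule ℂ V}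

/-- The grading associated to a bigraded decomposition, acting by `p + q` on `I^{p,q}`. -/
noncomputable def Ygrad (hInt : DirectSum.IsInternal (fun pq : ℤ × ℤ => I pq.1 pq.2)) :
    Module.End ℂ V :=
  letI := hInt.chooseDecomposition
  (DirectSum.toModule ℂ (ℤ × ℤ) V fun pq =>
      (((pq.1 + pq.2 : ℤ) : ℂ) • (I pq.1 pq.2).subtype)) ∘ₗ
    (DirectSum.decomposeLinearEquiv (fun pq : ℤ × ℤ => I pq.1 pq.2)).toLinearMap

lemma Ygrad_apply_of_mem (hInt : DirectSum.IsInternal (fun pq : ℤ × ℤ => I pq.1 pq.2))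
    {p q : ℤ} {v : V} (hv : v ∈ I p q) :
    Ygrad hInt v = ((p + q : ℤ) : ℂ) • v := by
  letI := hInt.chooseDecomposition
  have h1 : DirectSum.decompose (fun pq : ℤ × ℤ => I pq.1 pq.2) v
      = DirectSum.of _ ((p, q) : ℤ × ℤ) ⟨v, hv⟩ :=
    DirectSum.decompose_of_mem _ (i := ((p, q) : ℤ × ℤ)) hv
  have h2 : Ygrad hInt v = (DirectSum.toModule ℂ (ℤ × ℤ) V fun pq =>
      (((pq.1 + pq.2 : ℤ) : ℂ) • (I pq.1 pq.2).subtype))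
      (DirectSum.decompose (fun pq : ℤ × ℤ => I pq.1 pq.2) v) := rfl
  rw [h2, h1, ← DirectSum.lof_eq_of ℂ, DirectSum.toModule_lof]
  rfl

lemma Ygrad_mem (hInt : DirectSum.IsInternal (fun pq : ℤ × ℤ => I pq.1 pq.2))
    {p q : ℤ} {v : V} (hv : v ∈ I p q) : Ygrad hInt v ∈ I p q := by
  rw [Ygrad_apply_of_mem hInt hv]
  exact (I p q).smul_mem _ hv

lemma Ygrad_maps_biSup (hInt : DirectSum.IsInternal (fun pq : ℤ × ℤ => I pq.1 pq.2))
    {T : Set (ℤ × ℤ)} {v : V} (hv : v ∈ ⨆ j ∈ T, I j.1 j.2) :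
    Ygrad hInt v ∈ ⨆ j ∈ T, I j.1 j.2 := by
  rw [iSup_subtype'] at hv ⊢
  induction hv using Submodule.iSup_induction' with
  | mem j x hx =>
    exact Submodule.mem_iSup_of_mem j (Ygrad_mem hInt hx)
  | zero => simp
  | add x y _ _ ihx ihy => rw [map_add]; exact add_mem ihx ihy

lemma projOf_Ygrad (hInt : DirectSum.IsInternal (fun pq : ℤ × ℤ => I pq.1 pq.2))
    (j : ℤ × ℤ) (v : V) :
    projOf hInt j (Ygrad hInt v) = ((j.1 + j.2 : ℤ) : ℂ) • projOf hInt j v := by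
  have h := projOf_comm hInt (Ygrad hInt).toAddMonoidHom
    (fun j x hx => Ygrad_mem hInt hx) j v
  rw [show ((Ygrad hInt).toAddMonoidHom : V → V) = Ygrad hInt from rfl] at h
  rw [h, Ygrad_apply_of_mem hInt (projOf_mem hInt j v)]

/-- Reindexing nested suprema over pairs: the `F`-shape. -/
lemma biSup_pairs_F (I : ℤ → ℤ → Submodule ℂ V) (p : ℤ) :
    (⨆ r : ℤ, ⨆ (_ : p ≤ r), ⨆ s : ℤ, I r s)
      = ⨆ j ∈ {j : ℤ × ℤ | p ≤ j.1}, I j.1 j.2 := by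
  refine le_antisymm ?_ ?_
  · exact iSup_le fun r => iSup_le fun hr => iSup_le fun s =>
      le_iSup₂_of_le (r, s) hr le_rfl
  · exact iSup₂_le fun j hj =>
      le_iSup_of_le j.1 (le_iSup_of_le hj (le_iSup_of_le j.2 le_rfl))

/-- Reindexing nested suprema over pairs: the `W`-shape. -/
lemma biSup_pairs_W (I : ℤ → ℤ → Submodule ℂ V) (k : ℤ) :
    (⨆ r : ℤ, ⨆ s : ℤ, ⨆ (_ : r + s ≤ k), I r s)
      = ⨆ j ∈ {j : ℤ × ℤ | j.1 + j.2 ≤ k}, I j.1 j.2 := by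
  refine le_antisymm ?_ ?_
  · exact iSup_le fun r => iSup_le fun s => iSup_le fun hrs =>
      le_iSup₂_of_le (r, s) hrs le_rfl
  · exact iSup₂_le fun j hj =>
      le_iSup_of_le j.1 (le_iSup_of_le j.2 (le_iSup_of_le hj le_rfl))

lemma eigenspace_Ygrad (hInt : DirectSum.IsInternal (fun pq : ℤ × ℤ => I pq.1 pq.2))
    (i : ℤ) : (Ygrad hInt).eigenspace ((i : ℤ) : ℂ)
      = ⨆ j ∈ {j : ℤ × ℤ | j.1 + j.2 = i}, I j.1 j.2 := by
  classical
  refine le_antisymm ?_ (iSup₂_le fun j hj => ?_)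
  · intro v hv
    have hYv : Ygrad hInt v = ((i : ℤ) : ℂ) • v := Module.End.mem_eigenspace_iff.1 hv
    obtain ⟨s, hs, hz⟩ := exists_sum_projOf hInt v
    rw [← hs]
    refine Submodule.sum_mem _ fun j _ => ?_
    by_cases hji : j.1 + j.2 = i
    · exact Submodule.mem_iSup_of_mem j (Submodule.mem_iSup_of_mem
        (show j ∈ {j : ℤ × ℤ | j.1 + j.2 = i} from hji) (projOf_mem hInt j v))
    · have h1 : projOf hInt j (Ygrad hInt v) = ((j.1 + j.2 : ℤ) : ℂ) • projOf hInt j v :=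
        projOf_Ygrad hInt j v
      rw [hYv, map_smul] at h1
      have h2 : (((j.1 + j.2 : ℤ) : ℂ) - ((i : ℤ) : ℂ)) • projOf hInt j v = 0 := by
        rw [sub_smul, h1, sub_self]
      have hne : (((j.1 + j.2 : ℤ) : ℂ) - ((i : ℤ) : ℂ)) ≠ 0 :=
        sub_ne_zero.2 (fun h => hji (by exact_mod_cast h))
      rw [(smul_eq_zero.1 h2).resolve_left hne]
      exact Submodule.zero_mem _
  · intro x hx
    rw [Module.End.mem_eigenspace_iff, Ygrad_apply_of_mem hInt hx, hj]


variable (hσ : IsConjugation σ) (hWσ : ∀ k : ℤ, ∀ v ∈ W k, σ v ∈ W k)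
  (hIdef : ∀ p q : ℤ, I p q = F p ⊓ Fbar hσ F q ⊓ W (p + q))

include hσ hWσ hIdef

lemma sigma_I_mem {p q : ℤ} {v : V} (hv : v ∈ I p q) : σ v ∈ I q p := by
  rw [hIdef p q] at hv
  rw [hIdef q p]
  obtain ⟨⟨h1, h2⟩, h3⟩ := hv
  obtain ⟨u, huF, huσ⟩ := (mem_Fbar_iff hσ).1 h2
  refine ⟨⟨?_, sigma_mem_Fbar hσ h1⟩, ?_⟩
  · rw [← huσ, hσ.1]; exact huF
  · rw [show q + p = p + q by ring]; exact hWσ _ v h3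

lemma Ygrad_real (hInt : DirectSum.IsInternal (fun pq : ℤ × ℤ => I pq.1 pq.2)) :
    IsRealEnd σ (Ygrad hInt) := by
  intro v
  obtain ⟨s, hs, hz⟩ := exists_sum_projOf hInt v
  have hterm : ∀ j : ℤ × ℤ, ∀ x ∈ I j.1 j.2, σ (Ygrad hInt (σ x)) = Ygrad hInt x := by
    rintro ⟨p, q⟩ x hx
    have h1 : σ x ∈ I q p := sigma_I_mem hσ hWσ hIdef hx
    rw [Ygrad_apply_of_mem hInt h1, Ygrad_apply_of_mem hInt hx, hσ.2, hσ.1, map_intCast]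
    rw [show q + p = p + q by ring]
  conv_lhs => rw [← hs]
  conv_rhs => rw [← hs]
  calc σ (Ygrad hInt (σ (∑ j ∈ s, projOf hInt j v)))
      = σ (Ygrad hInt (∑ j ∈ s, σ (projOf hInt j v))) := by rw [map_sum]
    _ = σ (∑ j ∈ s, Ygrad hInt (σ (projOf hInt j v))) := by rw [map_sum]
    _ = ∑ j ∈ s, σ (Ygrad hInt (σ (projOf hInt j v))) := by rw [map_sum]
    _ = ∑ j ∈ s, Ygrad hInt (projOf hInt j v) :=
        Finset.sum_congr rfl fun j _ => hterm j _ (projOf_mem hInt j v)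
    _ = Ygrad hInt (∑ j ∈ s, projOf hInt j v) := (map_sum _ _ _).symm

omit hσ hWσ hIdef

lemma Ygrad_pres_F (hInt : DirectSum.IsInternal (fun pq : ℤ × ℤ => I pq.1 pq.2))
    (hFsup : ∀ p : ℤ, F p = ⨆ r : ℤ, ⨆ (_ : p ≤ r), ⨆ s : ℤ, I r s) :
    ∀ p : ℤ, ∀ v ∈ F p, Ygrad hInt v ∈ F p := by
  intro p v hv
  rw [hFsup p, biSup_pairs_F I p] at hv ⊢
  exact Ygrad_maps_biSup hInt hv

lemma Ygrad_grading (hInt : DirectSum.IsInternal (fun pq : ℤ × ℤ => I pq.1 pq.2))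
    (hWsup : ∀ k : ℤ, W k = ⨆ r : ℤ, ⨆ s : ℤ, ⨆ (_ : r + s ≤ k), I r s) :
    IsGrading W (Ygrad hInt) := by
  constructor
  · refine le_antisymm le_top ?_
    rw [← hInt.submodule_iSup_eq_top]
    refine iSup_le fun j => le_iSup_of_le (j.1 + j.2) ?_
    rw [eigenspace_Ygrad hInt]
    exact le_iSup₂_of_le j rfl le_rfl
  · intro i
    constructor
    · rw [eigenspace_Ygrad hInt i, hWsup i, hWsup (i - 1),
        biSup_pairs_W I i, biSup_pairs_W I (i - 1)]
      refine le_antisymm (iSup₂_le fun j hj => ?_)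
        (sup_le (iSup₂_le fun j hj => ?_)
          (iSup₂_mono' fun j hj => ⟨j, by
            simp only [Set.mem_setOf_eq] at hj ⊢; omega, le_rfl⟩))
      · by_cases h : j.1 + j.2 = i
        · exact le_sup_of_le_left (le_iSup₂_of_le j h le_rfl)
        · refine le_sup_of_le_right (le_iSup₂_of_le j ?_ le_rfl)
          simp only [Set.mem_setOf_eq] at hj ⊢; omega
      · refine le_iSup₂_of_le j ?_ le_rfl
        simp only [Set.mem_setOf_eq] at hj ⊢; omega
    · rw [eigenspace_Ygrad hInt i, hWsup (i - 1), biSup_pairs_W I (i - 1)]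
      rw [Submodule.disjoint_def]
      intro v hv1 hv2
      obtain ⟨s, hs, hz⟩ := exists_sum_projOf hInt v
      rw [← hs]
      refine Finset.sum_eq_zero fun j hj => ?_
      by_cases h : j.1 + j.2 = i
      · refine projOf_eq_zero_of_mem_iSup hInt ?_ hv2
        simp only [Set.mem_setOf_eq]; omega
      · exact projOf_eq_zero_of_mem_iSup hInt
          (T := {j : ℤ × ℤ | j.1 + j.2 = i}) (by simpa using h) hv1

end Construct
end ZL6

/-- for a mixed Hodge structure `(F, W)` and
`I^{p,q} = F^p ∩ σ(F^q) ∩ W_{p+q}`, the following are equivalent: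
(i) there is a real grading of `W` preserving `F`;
(ii) `V = ⊕ I^{p,q}`, `F^p = ⊕_{r ≥ p, s} I^{r,s}` and `W_k = ⊕_{r+s ≤ k} I^{r,s}`.
Moreover, in that case the grading in (i) is unique and acts as multiplication by
`p + q` on `I^{p,q}`. -/
theorem zero_loci_stmt6 {V : Type*} [AddCommGroup V] [Module ℂ V] [FiniteDimensional ℂ V]
    (σ : V →ₗ[ℝ] V) (hσ : IsConjugation σ)
    (F W : ℤ → Submodule ℂ V) (hFW : IsMHS σ F W)
    (I : ℤ → ℤ → Submodule ℂ V)
    (hI : ∀ p q : ℤ,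
      (I p q : Set V) = (F p : Set V) ∩ (⇑σ '' (F q : Set V)) ∩ (W (p + q) : Set V)) :
    ((∃ Y : Module.End ℂ V,
        IsGrading W Y ∧ IsRealEnd σ Y ∧ ∀ p : ℤ, ∀ v ∈ F p, Y v ∈ F p) ↔
      (DirectSum.IsInternal (fun pq : ℤ × ℤ => I pq.1 pq.2) ∧
        (∀ p : ℤ, F p = ⨆ (r : ℤ) (_ : p ≤ r) (s : ℤ), I r s) ∧
        (∀ k : ℤ, W k = ⨆ (r : ℤ) (s : ℤ) (_ : r + s ≤ k), I r s))) ∧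
    ((∃ Y : Module.End ℂ V,
        IsGrading W Y ∧ IsRealEnd σ Y ∧ ∀ p : ℤ, ∀ v ∈ F p, Y v ∈ F p) →
      (∃! Y : Module.End ℂ V,
        IsGrading W Y ∧ IsRealEnd σ Y ∧ ∀ p : ℤ, ∀ v ∈ F p, Y v ∈ F p) ∧
      ∀ Y : Module.End ℂ V,
        (IsGrading W Y ∧ IsRealEnd σ Y ∧ (∀ p : ℤ, ∀ v ∈ F p, Y v ∈ F p)) →
        ∀ p q : ℤ, ∀ v ∈ I p q, Y v = ((p + q : ℤ) : ℂ) • v) := by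
  classical
  have hIdef : ∀ p q : ℤ, I p q = F p ⊓ ZL6.Fbar hσ F q ⊓ W (p + q) := by
    intro p q
    apply Submodule.ext
    intro x
    have hset := Set.ext_iff.1 (hI p q) x
    simp only [Set.mem_inter_iff, SetLike.mem_coe, Set.mem_image] at hset
    constructor
    · intro hx
      obtain ⟨⟨h1, y, hy1, hy2⟩, h3⟩ := hset.1 hx
      exact ⟨⟨h1, ⟨y, hy1, hy2⟩⟩, h3⟩
    · rintro ⟨⟨h1, h2⟩, h3⟩
      obtain ⟨y, hy1, hy2⟩ := (ZL6.mem_Fbar_iff hσ).1 h2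
      exact hset.2 ⟨⟨h1, ⟨y, hy1, hy2⟩⟩, h3⟩
  have fwd : (∃ Y : Module.End ℂ V,
        IsGrading W Y ∧ IsRealEnd σ Y ∧ ∀ p : ℤ, ∀ v ∈ F p, Y v ∈ F p) →
      (DirectSum.IsInternal (fun pq : ℤ × ℤ => I pq.1 pq.2) ∧
        (∀ p : ℤ, F p = ⨆ (r : ℤ) (_ : p ≤ r) (s : ℤ), I r s) ∧
        (∀ k : ℤ, W k = ⨆ (r : ℤ) (s : ℤ) (_ : r + s ≤ k), I r s)) := by
    rintro ⟨Y, hY, hre, hpr⟩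
    have hIH : ∀ p q : ℤ, I p q = ZL6.Hpq hσ F Y p q := by
      intro p q
      rw [hIdef p q]
      apply le_antisymm
      · rintro v ⟨⟨h1, h2⟩, h3⟩
        exact ⟨⟨h1, h2⟩, ZL6.lemA hσ hFW hY hre hpr p q h1 h2 h3⟩
      · rintro v ⟨⟨h1, h2⟩, h3⟩
        exact ⟨⟨h1, h2⟩, ZL6.E_le_W hY (p + q) h3⟩
    have hfam : (fun pq : ℤ × ℤ => I pq.1 pq.2)
        = fun pq : ℤ × ℤ => ZL6.Hpq hσ F Y pq.1 pq.2 :=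
      funext fun pq => hIH pq.1 pq.2
    refine ⟨?_, ?_, ?_⟩
    · rw [hfam]
      exact DirectSum.isInternal_submodule_of_iSupIndep_of_iSup_eq_top
        (ZL6.indep_H hσ hFW hY hre hpr) (ZL6.iSup_H_top hσ hFW hY hre hpr)
    · intro p
      simp only [hIH]
      exact ZL6.F_formula hσ hFW hY hre hpr p
    · intro k
      simp only [hIH]
      exact ZL6.W_formula hσ hFW hY hre hpr k
  have bwd : (DirectSum.IsInternal (fun pq : ℤ × ℤ => I pq.1 pq.2) ∧
        (∀ p : ℤ, F p = ⨆ (r : ℤ) (_ : p ≤ r) (s : ℤ), I r s) ∧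
        (∀ k : ℤ, W k = ⨆ (r : ℤ) (s : ℤ) (_ : r + s ≤ k), I r s)) →
      (∃ Y : Module.End ℂ V,
        IsGrading W Y ∧ IsRealEnd σ Y ∧ ∀ p : ℤ, ∀ v ∈ F p, Y v ∈ F p) := by
    rintro ⟨hInt, hFsup, hWsup⟩
    exact ⟨ZL6.Ygrad hInt, ZL6.Ygrad_grading hInt hWsup,
      ZL6.Ygrad_real hσ hFW.2.1 hIdef hInt, ZL6.Ygrad_pres_F hInt hFsup⟩
  have hmore : ∀ Y : Module.End ℂ V,
      (IsGrading W Y ∧ IsRealEnd σ Y ∧ (∀ p : ℤ, ∀ v ∈ F p, Y v ∈ F p)) →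
      ∀ p q : ℤ, ∀ v ∈ I p q, Y v = ((p + q : ℤ) : ℂ) • v := by
    rintro Y ⟨hY, hre, hpr⟩ p q v hv
    rw [hIdef p q] at hv
    exact Module.End.mem_eigenspace_iff.1
      (ZL6.lemA hσ hFW hY hre hpr p q hv.1.1 hv.1.2 hv.2)
  refine ⟨⟨fwd, bwd⟩, ?_⟩
  intro hex
  obtain ⟨hInt, hFsup, hWsup⟩ := fwd hex
  refine ⟨?_, hmore⟩
  obtain ⟨Y0, hY0⟩ := hex
  refine ⟨Y0, hY0, ?_⟩
  intro Y1 hY1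
  apply LinearMap.ext
  intro v
  obtain ⟨s, hs, hz⟩ := ZL6.exists_sum_projOf hInt v
  conv_lhs => rw [← hs]
  conv_rhs => rw [← hs]
  rw [map_sum, map_sum]
  refine Finset.sum_congr rfl fun j _ => ?_
  rw [hmore Y1 hY1 j.1 j.2 _ (ZL6.projOf_mem hInt j v),
      hmore Y0 hY0 j.1 j.2 _ (ZL6.projOf_mem hInt j v)]
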